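/- Let R →^β A_0 →^γ A_1 be ring homomorphisms with α = γ ∘ β. Suppose there is a surjection A_0^m ↠ A_1 of A_0-bimodules for some m, and PC_l(β) holds. Then PC_l(α) holds, and S_l(α) = {s ∈ A_1 : as ∈ γ(S_l(β)) for some a ∈ A_1}. -/

import Mathlib

/-- A left ideal `L` of `A` is `R`-cofinite (via `α : R →+* A`) if `A ⧸ L` is a
Noetherian left `R`-module via restriction of scalars along `α`. -/
def RCofiniteIdeal {R A : Type*} [Ring R] [Ring A] (α : R →+* A)
    (L : Submodule A A) : Prop :=
  @IsNoetherian R (A ⧸ L) _ _ (Module.compHom _ α)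

/-- `s ∈ A` is left `R`-cofinite if `A ⧸ As` is a Noetherian left `R`-module via `α`. -/
def LeftCofinite {R A : Type*} [Ring R] [Ring A] (α : R →+* A) (s : A) : Prop :=
  RCofiniteIdeal α (Submodule.span A {s})

/-- `PC_l(α)`: every `R`-cofinite left ideal of `A` contains a left `R`-cofinite element. -/
def PCl {R A : Type*} [Ring R] [Ring A] (α : R →+* A) : Prop :=
  ∀ L : Submodule A A, RCofiniteIdeal α L → ∃ s ∈ L, LeftCofinite α s

section AuxPC

variable {R A₀ A₁ : Type*} [Ring R] [Ring A₀] [Ring A₁]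

/-- Pullback of a left ideal along a ring hom. -/
def pcComapIdeal (γ : A₀ →+* A₁) (L : Submodule A₁ A₁) : Submodule A₀ A₀ where
  carrier := {a | γ a ∈ L}
  add_mem' := fun {a b} ha hb => by
    simpa only [Set.mem_setOf_eq, map_add] using L.add_mem ha hb
  zero_mem' := by simp
  smul_mem' := fun c x hx => by
    simpa only [Set.mem_setOf_eq, smul_eq_mul, map_mul] using L.smul_mem (γ c) hx

theorem pc_cofinite_mono {A : Type*} [Ring A] (α : R →+* A)
    {I J : Submodule A A} (h : I ≤ J) (hI : RCofiniteIdeal α I) :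
    RCofiniteIdeal α J := by
  letI : Module R (A ⧸ I) := Module.compHom _ α
  letI : Module R (A ⧸ J) := Module.compHom _ α
  haveI : IsNoetherian R (A ⧸ I) := hI
  let g : (A ⧸ I) →ₗ[A] (A ⧸ J) := Submodule.mapQ I J LinearMap.id h
  let f : (A ⧸ I) →ₗ[R] (A ⧸ J) :=
    { toFun := g
      map_add' := g.map_add
      map_smul' := fun r x => g.map_smul (α r) x }
  refine isNoetherian_of_surjective f (LinearMap.range_eq_top.mpr ?_)
  intro y
  obtain ⟨x, rfl⟩ := Submodule.Quotient.mk_surjective J y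
  exact ⟨Submodule.Quotient.mk x, by simp [f, g, Submodule.mapQ_apply]⟩

theorem pc_cofinite_comap (β : R →+* A₀) (γ : A₀ →+* A₁) {L : Submodule A₁ A₁}
    (hL : RCofiniteIdeal (γ.comp β) L) : RCofiniteIdeal β (pcComapIdeal γ L) := by
  letI : Module R (A₁ ⧸ L) := Module.compHom _ (γ.comp β)
  haveI : IsNoetherian R (A₁ ⧸ L) := hL
  letI : Module A₀ (A₁ ⧸ L) := Module.compHom _ γ
  let g : A₀ →ₗ[A₀] (A₁ ⧸ L) :=
    { toFun := fun a => Submodule.Quotient.mk (γ a)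
      map_add' := fun a b => by simp [Submodule.Quotient.mk_add]
      map_smul' := fun b a => by
        show (Submodule.Quotient.mk (γ (b * a)) : A₁ ⧸ L) = γ b • (Submodule.Quotient.mk (γ a) : A₁ ⧸ L)
        rw [map_mul, ← Submodule.Quotient.mk_smul]
        rfl }
  have hker : pcComapIdeal γ L ≤ LinearMap.ker g := by
    intro a ha
    rw [LinearMap.mem_ker]
    exact (Submodule.Quotient.mk_eq_zero L).mpr ha
  let f0 : (A₀ ⧸ pcComapIdeal γ L) →ₗ[A₀] (A₁ ⧸ L) :=
    Submodule.liftQ _ g hker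
  letI : Module R (A₀ ⧸ pcComapIdeal γ L) := Module.compHom _ β
  let f : (A₀ ⧸ pcComapIdeal γ L) →ₗ[R] (A₁ ⧸ L) :=
    { toFun := f0
      map_add' := f0.map_add
      map_smul' := fun r x => f0.map_smul (β r) x }
  refine isNoetherian_of_injective f ?_
  intro x y hxy
  obtain ⟨a, rfl⟩ := Submodule.Quotient.mk_surjective _ x
  obtain ⟨b, rfl⟩ := Submodule.Quotient.mk_surjective _ y
  have : Submodule.Quotient.mk (γ a) = (Submodule.Quotient.mk (γ b) : A₁ ⧸ L) := hxy
  rw [Submodule.Quotient.eq] at this ⊢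
  show γ (a - b) ∈ L
  simpa [map_sub] using this

theorem pc_leftCofinite_map (β : R →+* A₀) (γ : A₀ →+* A₁) (m : ℕ) (u : Fin m → A₁)
    (hcomm : ∀ (i : Fin m) (a : A₀), γ a * u i = u i * γ a)
    (hsurj : ∀ x : A₁, ∃ c : Fin m → A₀, x = ∑ i, γ (c i) * u i)
    {s₀ : A₀} (h : LeftCofinite β s₀) :
    LeftCofinite (γ.comp β) (γ s₀) := by
  set I : Submodule A₀ A₀ := Submodule.span A₀ {s₀} with hI
  set J : Submodule A₁ A₁ := Submodule.span A₁ {γ s₀} with hJ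
  letI : Module R (A₀ ⧸ I) := Module.compHom _ β
  haveI hN : IsNoetherian R (A₀ ⧸ I) := h
  letI : Module R (A₁ ⧸ J) := Module.compHom _ (γ.comp β)
  letI : Module A₀ (A₁ ⧸ J) := Module.compHom _ γ
  -- component maps
  have hker : ∀ i : Fin m, I ≤ LinearMap.ker
      ({ toFun := fun a => Submodule.Quotient.mk (γ a * u i)
         map_add' := fun a b => by simp [add_mul, Submodule.Quotient.mk_add]
         map_smul' := fun b a => by
           show (Submodule.Quotient.mk (γ (b * a) * u i) : A₁ ⧸ J)
               = γ b • (Submodule.Quotient.mk (γ a * u i) : A₁ ⧸ J)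
           rw [map_mul, mul_assoc, ← Submodule.Quotient.mk_smul]
           rfl } : A₀ →ₗ[A₀] (A₁ ⧸ J)) := by
    intro i
    rw [hI, Submodule.span_le, Set.singleton_subset_iff, SetLike.mem_coe,
      LinearMap.mem_ker]
    show Submodule.Quotient.mk (γ s₀ * u i) = 0
    rw [hcomm i s₀, Submodule.Quotient.mk_eq_zero]
    exact Submodule.smul_mem _ (u i) (Submodule.mem_span_singleton_self _)
  let φ : Fin m → ((A₀ ⧸ I) →ₗ[A₀] (A₁ ⧸ J)) := fun i => Submodule.liftQ _ _ (hker i)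
  let φ' : Fin m → ((A₀ ⧸ I) →ₗ[R] (A₁ ⧸ J)) := fun i =>
    { toFun := φ i
      map_add' := (φ i).map_add
      map_smul' := fun r x => (φ i).map_smul (β r) x }
  let F : (Fin m → (A₀ ⧸ I)) →ₗ[R] (A₁ ⧸ J) :=
    ∑ i, (φ' i).comp (LinearMap.proj i)
  haveI : IsNoetherian R (Fin m → (A₀ ⧸ I)) := inferInstance
  refine isNoetherian_of_surjective F (LinearMap.range_eq_top.mpr ?_)
  intro y
  obtain ⟨x, rfl⟩ := Submodule.Quotient.mk_surjective J y
  obtain ⟨c, hc⟩ := hsurj x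
  refine ⟨fun i => Submodule.Quotient.mk (c i), ?_⟩
  have : F (fun i => Submodule.Quotient.mk (c i))
      = ∑ i, (Submodule.Quotient.mk (γ (c i) * u i) : A₁ ⧸ J) := by
    simp [F, LinearMap.sum_apply, φ', φ, Submodule.liftQ_apply]
  rw [this, hc]
  exact (map_sum (Submodule.mkQ J) _ _).symm

end AuxPC

/-- Let `R →β A₀ →γ A₁` with `α = γ ∘ β`. Suppose `A₁` is an epimorphic image of the
`A₀`-bimodule `A₀^m` (witnessed by elements `u i` centralising the image of `γ`, which
generate `A₁` as a left module over the image of `γ`), and `PC_l(β)` holds. Then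
`PC_l(α)` holds and `S_l(α) = { s : as ∈ γ(S_l(β)) for some a }`. -/
theorem pcl_comp_of_bimodule_surjection {R A₀ A₁ : Type*} [Ring R] [Ring A₀] [Ring A₁]
    (β : R →+* A₀) (γ : A₀ →+* A₁) (m : ℕ) (u : Fin m → A₁)
    (hcomm : ∀ (i : Fin m) (a : A₀), γ a * u i = u i * γ a)
    (hsurj : ∀ x : A₁, ∃ c : Fin m → A₀, x = ∑ i, γ (c i) * u i)
    (hβ : PCl β) :
    PCl (γ.comp β) ∧
      ∀ s : A₁, LeftCofinite (γ.comp β) s ↔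
        ∃ (a : A₁) (s₀ : A₀), LeftCofinite β s₀ ∧ a * s = γ s₀ := by
  have main : ∀ L : Submodule A₁ A₁, RCofiniteIdeal (γ.comp β) L →
      ∃ s₀ : A₀, γ s₀ ∈ L ∧ LeftCofinite β s₀ := fun L hL => by
    obtain ⟨s₀, hs₀L, hs₀⟩ := hβ _ (pc_cofinite_comap β γ hL)
    exact ⟨s₀, hs₀L, hs₀⟩
  constructor
  · intro L hL
    obtain ⟨s₀, hmem, hcf⟩ := main L hL
    exact ⟨γ s₀, hmem, pc_leftCofinite_map β γ m u hcomm hsurj hcf⟩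
  · intro s
    constructor
    · intro hs
      obtain ⟨s₀, hmem, hcf⟩ := main (Submodule.span A₁ {s}) hs
      rw [Submodule.mem_span_singleton] at hmem
      obtain ⟨a, ha⟩ := hmem
      exact ⟨a, s₀, hcf, ha⟩
    · rintro ⟨a, s₀, hcf, hab⟩
      have h1 : LeftCofinite (γ.comp β) (γ s₀) :=
        pc_leftCofinite_map β γ m u hcomm hsurj hcf
      have h2 : Submodule.span A₁ {γ s₀} ≤ Submodule.span A₁ {s} := by
        rw [Submodule.span_le, Set.singleton_subset_iff, ← hab]
        exact Submodule.smul_mem _ a (Submodule.mem_span_singleton_self s)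
      exact pc_cofinite_mono (γ.comp β) h2 h1
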